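/- Let X be a subshift of finite type and f : X → X a cellular automaton with f∘f = f. Then the image f(X) is a subshift of finite type. -/

import Mathlib

/-- The shift map on the full shift `A^ℤ`: `σ(x)_i = x_{i+1}`. -/
def shiftMap {A : Type*} (x : ℤ → A) : ℤ → A := fun i => x (i + 1)

/-- A cellular automaton on the full shift `A^ℤ` (with the product topology,
`A` discrete): a continuous map commuting with the shift. -/
def IsCA {A : Type*} [TopologicalSpace A] (f : (ℤ → A) → (ℤ → A)) : Prop :=
  Continuous f ∧ ∀ x, f (shiftMap x) = shiftMap (f x)

/-- `f` is von Neumann regular in the monoid `End(A^ℤ)` of cellular automata: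
there is a CA `h` with `f ∘ h ∘ f = f` and `h ∘ f ∘ h = h`. -/
def IsRegularCA {A : Type*} [TopologicalSpace A] (f : (ℤ → A) → (ℤ → A)) : Prop :=
  ∃ h : (ℤ → A) → (ℤ → A), IsCA h ∧ f ∘ h ∘ f = f ∧ h ∘ f ∘ h = h

/-- A subshift: a closed, shift-invariant subset of the full shift. -/
def IsSubshift {A : Type*} [TopologicalSpace A] (X : Set (ℤ → A)) : Prop :=
  IsClosed X ∧ shiftMap '' X = X

/-- The finite word `w` occurs as a subword of the bi-infinite sequence `x`. -/
def occursIn {A : Type*} (w : List A) (x : ℤ → A) : Prop :=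
  ∃ i : ℤ, ∀ k : Fin w.length, x (i + (k.val : ℤ)) = w.get k

/-- A subshift of finite type: the set of points avoiding a finite set `F` of
forbidden finite words. -/
def IsSFT {A : Type*} (X : Set (ℤ → A)) : Prop :=
  ∃ F : Set (List A), F.Finite ∧ X = {x | ∀ w ∈ F, ¬ occursIn w x}

/-- The language of a subshift: the finite words occurring in its points. -/
def lang {A : Type*} (X : Set (ℤ → A)) : Set (List A) :=
  {w | ∃ x ∈ X, occursIn w x}

/-- `X` is mixing: for all words `u, v` in the language of `X` there is `N` such
that for every `n ≥ N` some word `u w v` with `|w| = n` is in the language. -/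
def IsMixing {A : Type*} (X : Set (ℤ → A)) : Prop :=
  ∀ u ∈ lang X, ∀ v ∈ lang X, ∃ N : ℕ, ∀ n : ℕ, N ≤ n →
    ∃ w : List A, w.length = n ∧ (u ++ w ++ v) ∈ lang X

/-- A cellular automaton on the subshift `X`: a map `X → X` (presented as a map
of the ambient full shift restricted to `X`) that is continuous on `X` and
commutes with the shift on `X`. -/
def IsCAOn {A : Type*} [TopologicalSpace A] (X : Set (ℤ → A))
    (f : (ℤ → A) → (ℤ → A)) : Prop :=
  Set.MapsTo f X X ∧ ContinuousOn f X ∧ ∀ x ∈ X, f (shiftMap x) = shiftMap (f x)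

/-- `f` is von Neumann regular as an element of the monoid `End(X)` of cellular
automata on `X`: there is a CA `h` on `X` with `f∘h∘f = f` and `h∘f∘h = h` as
maps on `X`. -/
def IsRegularCAOn {A : Type*} [TopologicalSpace A] (X : Set (ℤ → A))
    (f : (ℤ → A) → (ℤ → A)) : Prop :=
  ∃ h : (ℤ → A) → (ℤ → A), IsCAOn X h ∧
    (∀ x ∈ X, f (h (f x)) = f x) ∧ (∀ x ∈ X, h (f (h x)) = h x)

namespace SFTAux

variable {A : Type*}

/-- Translation by `n`. -/
def tr (n : ℤ) (x : ℤ → A) : ℤ → A := fun i => x (i + n)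

lemma tr_zero (x : ℤ → A) : tr 0 x = x := by funext i; simp [tr]

lemma tr_succ (n : ℤ) (x : ℤ → A) : tr (n + 1) x = shiftMap (tr n x) := by
  funext i; simp only [tr, shiftMap]; ring_nf

/-- Inverse shift. -/
def shiftInv (x : ℤ → A) : ℤ → A := fun i => x (i - 1)

lemma shiftInv_shiftMap (x : ℤ → A) : shiftInv (shiftMap x) = x := by
  funext i; simp [shiftInv, shiftMap]

lemma tr_pred (n : ℤ) (x : ℤ → A) : tr (n - 1) x = shiftInv (tr n x) := by
  funext i; simp only [tr, shiftInv]; ring_nf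

section
variable [TopologicalSpace A] {X : Set (ℤ → A)} {f : (ℤ → A) → (ℤ → A)}

lemma memX_shift (hX : shiftMap '' X = X) {x : ℤ → A} (hx : x ∈ X) :
    shiftMap x ∈ X := by
  rw [← hX]; exact Set.mem_image_of_mem _ hx

lemma memX_shiftInv (hX : shiftMap '' X = X) {x : ℤ → A} (hx : x ∈ X) :
    shiftInv x ∈ X := by
  rw [← hX] at hx
  obtain ⟨y, hy, rfl⟩ := hx
  rwa [shiftInv_shiftMap]

lemma memX_tr (hX : shiftMap '' X = X) (n : ℤ) {x : ℤ → A} (hx : x ∈ X) :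
    tr n x ∈ X := by
  induction n using Int.induction_on with
  | zero => rwa [tr_zero]
  | succ k ih => rw [tr_succ]; exact memX_shift hX ih
  | pred k ih => rw [show (-(k:ℤ) - 1) = (-(k:ℤ)) - 1 from rfl, tr_pred]
                 exact memX_shiftInv hX ih

lemma f_shiftInv (hX : shiftMap '' X = X)
    (hcomm : ∀ x ∈ X, f (shiftMap x) = shiftMap (f x))
    {x : ℤ → A} (hx : x ∈ X) : f (shiftInv x) = shiftInv (f x) := by
  have hy : shiftInv x ∈ X := memX_shiftInv hX hx
  have h1 : shiftMap (shiftInv x) = x := by funext i; simp [shiftInv, shiftMap]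
  have := hcomm _ hy
  rw [h1] at this
  rw [this, shiftInv_shiftMap]

lemma f_tr (hX : shiftMap '' X = X)
    (hcomm : ∀ x ∈ X, f (shiftMap x) = shiftMap (f x))
    (n : ℤ) {x : ℤ → A} (hx : x ∈ X) : f (tr n x) = tr n (f x) := by
  induction n using Int.induction_on with
  | zero => rw [tr_zero, tr_zero]
  | succ k ih =>
      rw [tr_succ, tr_succ, hcomm _ (memX_tr hX _ hx), ih]
  | pred k ih =>
      rw [show (-(k:ℤ) - 1) = (-(k:ℤ)) - 1 from rfl, tr_pred, tr_pred,
        f_shiftInv hX hcomm (memX_tr hX _ hx), ih]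

end

section
variable [Finite A] [TopologicalSpace A] [DiscreteTopology A]
variable {X : Set (ℤ → A)} {f : (ℤ → A) → (ℤ → A)}

/-- Uniform local rule at coordinate `0`, by compactness. -/
lemma localRule (hXc : IsClosed X) (hcont : ContinuousOn f X) :
    ∃ r : ℕ, ∀ x ∈ X, ∀ y ∈ X, (∀ i : ℤ, i.natAbs ≤ r → x i = y i) →
      f x 0 = f y 0 := by
  have key : ∀ x ∈ X, ∃ I : Finset ℤ,
      ∀ y ∈ X, (∀ i ∈ I, y i = x i) → f y 0 = f x 0 := by
    intro x hx
    have hg : ContinuousWithinAt (fun z => f z 0) X x :=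
      ((continuous_apply 0).comp_continuousOn hcont) x hx
    have hpre : (fun z => f z 0) ⁻¹' {f x 0} ∈ nhdsWithin x X :=
      hg.preimage_mem_nhdsWithin (by simp [nhds_discrete])
    obtain ⟨U, hUopen, hxU, hUsub⟩ := mem_nhdsWithin.1 hpre
    obtain ⟨I, u, hu, hpisub⟩ := isOpen_pi_iff.1 hUopen x hxU
    refine ⟨I, fun y hy hagree => ?_⟩
    have hyU : y ∈ U := by
      apply hpisub
      intro i hi
      have : y i = x i := hagree i hi
      rw [this]
      exact (hu i hi).2
    exact hUsub ⟨hyU, hy⟩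
  choose I hI using key
  have hcomp : IsCompact X := hXc.isCompact
  obtain ⟨t, ht⟩ := hcomp.elim_nhds_subcover'
    (fun x hx => {y | ∀ i ∈ I x hx, y i = x i})
    (fun x hx => by
      have : IsOpen {y : ℤ → A | ∀ i ∈ I x hx, y i = x i} := by
        have heq : {y : ℤ → A | ∀ i ∈ I x hx, y i = x i}
            = Set.pi (↑(I x hx)) (fun i => {x i}) := by
          ext y; simp [Set.mem_pi]
        rw [heq]
        exact isOpen_set_pi (I x hx).finite_toSet (fun a _ => isOpen_discrete _)
      exact this.mem_nhds (fun i _ => rfl))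
  set s₀ : Finset ℤ := t.sup (fun z => I z.1 z.2) with hs₀
  refine ⟨s₀.sup Int.natAbs, fun x hx y hy hagree => ?_⟩
  obtain ⟨z, hzt, hxz⟩ := Set.mem_iUnion₂.1 (ht hx)
  have hIz : I z.1 z.2 ⊆ s₀ := Finset.le_iff_subset.mp (hs₀ ▸ Finset.le_sup (f := fun z : {a : (ℤ → A) // a ∈ X} => I z.1 z.2) hzt)
  have hyz : ∀ i ∈ I z.1 z.2, y i = z.1 i := by
    intro i hi
    rw [← hagree i (Finset.le_sup (f := Int.natAbs) (hIz hi)), hxz i hi]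
  rw [hI z.1 z.2 x hx hxz, hI z.1 z.2 y hy hyz]

end

end SFTAux

/-- If `X` is an SFT and `f : X → X` is an idempotent cellular automaton
(`f ∘ f = f` on `X`), then the image `f(X)` is an SFT. -/


theorem stmt6 {A : Type*} [Finite A] [TopologicalSpace A] [DiscreteTopology A]
    (X : Set (ℤ → A)) (hX : IsSubshift X) (hXsft : IsSFT X)
    (f : (ℤ → A) → (ℤ → A)) (hf : IsCAOn X f)
    (hidem : ∀ x ∈ X, f (f x) = f x) :
    IsSFT (f '' X) := by
  classical
  obtain ⟨hXclosed, hXshift⟩ := hX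
  obtain ⟨F₀, hF₀fin, hF₀⟩ := hXsft
  obtain ⟨hmap, hcont, hcomm⟩ := hf
  obtain ⟨r, hr⟩ := SFTAux.localRule hXclosed hcont
  set n : ℕ := 2 * r + 1 with hn
  refine ⟨F₀ ∪ {w | w.length = n ∧ w ∉ lang (f '' X)},
    hF₀fin.union ((List.finite_length_eq A n).subset (fun w hw => hw.1)), ?_⟩
  ext x
  constructor
  · rintro ⟨z, hz, rfl⟩ w hw how
    have hfz : f z ∈ X := hmap hz
    rcases hw with hw | hw
    · rw [hF₀] at hfz; exact hfz w hw how
    · exact hw.2 ⟨f z, ⟨z, hz, rfl⟩, how⟩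
  · intro hG
    have hxX : x ∈ X := by
      rw [hF₀]; intro w hw; exact hG w (Or.inl hw)
    refine ⟨x, hxX, ?_⟩
    funext i
    set w : List A := List.ofFn (fun k : Fin n => x (i - r + (k : ℤ))) with hw
    have hlen : w.length = n := List.length_ofFn
    have hgetw : ∀ (m : ℕ) (hm : m < w.length), w.get ⟨m, hm⟩ = x (i - r + m) := by
      intro m hm
      simp only [hw, List.get_eq_getElem, List.getElem_ofFn]
    have hocc : occursIn w x := ⟨i - r, fun k => (hgetw k.1 k.2).symm⟩
    have hwlang : w ∈ lang (f '' X) := by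
      by_contra h
      exact hG w (Or.inr ⟨hlen, h⟩) hocc
    obtain ⟨y, hyim, j, hj⟩ := hwlang
    obtain ⟨z, hz, rfl⟩ := hyim
    have hfzX : f z ∈ X := hmap hz
    have hfy : f (f z) = f z := hidem z hz
    have hx' : SFTAux.tr i x ∈ X := SFTAux.memX_tr hXshift i hxX
    have hy' : SFTAux.tr (j + r) (f z) ∈ X := SFTAux.memX_tr hXshift _ hfzX
    have hagree : ∀ k : ℤ, k.natAbs ≤ r →
        SFTAux.tr i x k = SFTAux.tr (j + r) (f z) k := by
      intro k hk
      have hmlt : (k + r).toNat < w.length := by rw [hlen]; omega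
      have hj' := hj ⟨(k + r).toNat, hmlt⟩
      rw [hgetw _ hmlt] at hj'
      have hcast : (((k + r).toNat : ℕ) : ℤ) = k + r := Int.toNat_of_nonneg (by omega)
      show x (k + i) = f z (k + (j + r))
      rw [hcast] at hj'
      have h1 : i - r + (k + r) = k + i := by ring
      have h2 : j + (k + r) = k + (j + r) := by ring
      rw [h1, h2] at hj'
      exact hj'.symm
    have hmain : f (SFTAux.tr i x) 0 = f (SFTAux.tr (j + r) (f z)) 0 :=
      hr _ hx' _ hy' hagree
    rw [SFTAux.f_tr hXshift hcomm i hxX, SFTAux.f_tr hXshift hcomm _ hfzX] at hmain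
    have h3 : SFTAux.tr i (f x) 0 = f x i := by simp [SFTAux.tr]
    have h4 : SFTAux.tr (j + r) (f (f z)) 0 = f z (j + r) := by
      simp [SFTAux.tr, hfy]
    rw [h3, h4] at hmain
    have hrlt : (r : ℕ) < w.length := by rw [hlen]; omega
    have h5 := hj ⟨r, hrlt⟩
    rw [hgetw r hrlt] at h5
    rw [hmain, h5]
    congr 1
    ring
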